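/- arXiv:2306.13604 — 7 statements merged into one kernel-verified Lean document; each statement's English description precedes it below -/
import Mathlib

section
/- The map (x,y) ↦ ((1−y)/(1−x), y, 1−x, x/y, (y−x)/((1−x)·y)) is a bijection from the set D = {(x,y) ∈ ℂ² : x·y·(1−x)·(1−y)·(y−x) ≠ 0} onto the set of all u ∈ ℂ⁵ with u1,...,u5 all nonzero satisfying the M0,5 u-equations; the inverse sends such a u to (1−u3, u2). -/
/-- The domain: pairs `(x,y)` with `x·y·(1−x)·(1−y)·(y−x) ≠ 0`. -/
def Dset : Set (ℂ × ℂ) :=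
  {p | p.1 * p.2 * (1 - p.1) * (1 - p.2) * (p.2 - p.1) ≠ 0}

/-- The set of `u ∈ ℂ⁵` with all coordinates nonzero satisfying the `M_{0,5}` u-equations. -/
def Uset : Set (ℂ × ℂ × ℂ × ℂ × ℂ) :=
  {u | u.1 ≠ 0 ∧ u.2.1 ≠ 0 ∧ u.2.2.1 ≠ 0 ∧ u.2.2.2.1 ≠ 0 ∧ u.2.2.2.2 ≠ 0 ∧
    u.1 * u.2.2.1 + u.2.1 = 1 ∧
    u.2.1 * u.2.2.2.1 + u.2.2.1 = 1 ∧
    u.2.2.1 * u.2.2.2.2 + u.2.2.2.1 = 1 ∧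
    u.2.2.2.1 * u.1 + u.2.2.2.2 = 1 ∧
    u.2.2.2.2 * u.2.1 + u.1 = 1}

/-- The cross-ratio map `(x,y) ↦ (u1,u2,u3,u4,u5)`. -/
noncomputable def crossRatioMap (p : ℂ × ℂ) : ℂ × ℂ × ℂ × ℂ × ℂ :=
  ((1 - p.2) / (1 - p.1), p.2, 1 - p.1, p.1 / p.2, (p.2 - p.1) / ((1 - p.1) * p.2))

/-- The inverse map `u ↦ (1 − u3, u2)`. -/
def invMap (u : ℂ × ℂ × ℂ × ℂ × ℂ) : ℂ × ℂ := (1 - u.2.2.1, u.2.1)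

lemma mapsTo1 : Set.MapsTo crossRatioMap Dset Uset := by
  rintro ⟨x, y⟩ hp
  simp only [Dset, Set.mem_setOf_eq, mul_ne_zero_iff] at hp
  obtain ⟨⟨⟨⟨hx, hy⟩, h1x⟩, h1y⟩, hyx⟩ := hp
  refine ⟨div_ne_zero h1y h1x, hy, h1x, div_ne_zero hx hy,
    div_ne_zero hyx (mul_ne_zero h1x hy), ?_, ?_, ?_, ?_, ?_⟩ <;>
  · simp only [crossRatioMap]
    field_simp
    try ring

lemma mapsTo2 : Set.MapsTo invMap Uset Dset := by
  rintro ⟨u1, u2, u3, u4, u5⟩ ⟨h1, h2, h3, h4, h5, e1, e2, e3, e4, e5⟩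
  simp only [Dset, invMap, Set.mem_setOf_eq, mul_ne_zero_iff]
  have a1 : (1 : ℂ) - u3 = u2 * u4 := by linear_combination -e2
  have a2 : (1 : ℂ) - u2 = u1 * u3 := by linear_combination -e1
  have a3 : u2 - (1 - u3) = u2 * (u3 * u5) := by linear_combination e2 - u2 * e3
  refine ⟨⟨⟨⟨?_, h2⟩, ?_⟩, ?_⟩, ?_⟩
  · rw [a1]; exact mul_ne_zero h2 h4
  · simpa using h3
  · rw [a2]; exact mul_ne_zero h1 h3
  · rw [a3]; exact mul_ne_zero h2 (mul_ne_zero h3 h5)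

lemma invOn1 : Set.InvOn invMap crossRatioMap Dset Uset := by
  constructor
  · rintro ⟨x, y⟩ _
    simp [invMap, crossRatioMap]
  · rintro ⟨u1, u2, u3, u4, u5⟩ ⟨h1, h2, h3, h4, h5, e1, e2, e3, e4, e5⟩
    simp only [crossRatioMap, invMap, sub_sub_cancel, Prod.mk.injEq]
    refine ⟨?_, trivial, trivial, ?_, ?_⟩
    · field_simp; linear_combination -e1
    · field_simp; linear_combination -e2
    · field_simp; linear_combination e2 - u2 * e3

/-- The cross-ratio map is a bijection from `Dset` onto `Uset`, with inverse `invMap`. -/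
theorem stmt1 :
    Set.BijOn crossRatioMap Dset Uset ∧ Set.InvOn invMap crossRatioMap Dset Uset :=
  ⟨invOn1.bijOn mapsTo1 mapsTo2, invOn1⟩
end

section
/- The set of sign vectors (sign(u1),...,sign(u5)) realized by real vectors u ∈ (ℝ∖{0})⁵ satisfying the M0,5 u-equations is exactly the following set of 12 of the 32 possible sign vectors: (+,+,+,+,+), (−,+,+,+,+), (+,−,+,+,+), (+,+,−,+,+), (+,+,+,−,+), (+,+,+,+,−), (−,−,−,−,−), (+,−,+,−,+), (+,+,−,+,−), (−,+,+,−,+), (+,−,+,+,−), (−,+,−,+,+). That is, every such u has sign vector in this list, and each of the 12 listed sign vectors is realized by some such u. -/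
/-- The set of sign vectors (with `true` = positive, `false` = negative) realized by
real solutions with all coordinates nonzero of the `M_{0,5}` u-equations is exactly the
stated list of 12 sign vectors. -/
theorem stmt2 :
    {s : Bool × Bool × Bool × Bool × Bool |
      ∃ u1 u2 u3 u4 u5 : ℝ,
        u1 ≠ 0 ∧ u2 ≠ 0 ∧ u3 ≠ 0 ∧ u4 ≠ 0 ∧ u5 ≠ 0 ∧
        u1 * u3 + u2 = 1 ∧ u2 * u4 + u3 = 1 ∧ u3 * u5 + u4 = 1 ∧
        u4 * u1 + u5 = 1 ∧ u5 * u2 + u1 = 1 ∧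
        (s.1 = true ↔ 0 < u1) ∧ (s.2.1 = true ↔ 0 < u2) ∧ (s.2.2.1 = true ↔ 0 < u3) ∧
        (s.2.2.2.1 = true ↔ 0 < u4) ∧ (s.2.2.2.2 = true ↔ 0 < u5)} =
    {(true, true, true, true, true), (false, true, true, true, true),
     (true, false, true, true, true), (true, true, false, true, true),
     (true, true, true, false, true), (true, true, true, true, false),
     (false, false, false, false, false), (true, false, true, false, true),
     (true, true, false, true, false), (false, true, true, false, true),
     (true, false, true, true, false), (false, true, false, true, true)} := by
  ext ⟨a, b, c, d, e⟩
  simp only [Set.mem_setOf_eq, Set.mem_insert_iff, Set.mem_singleton_iff, Prod.mk.injEq]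
  constructor
  · rintro ⟨u1, u2, u3, u4, u5, n1, n2, n3, n4, n5, e1, e2, e3, e4, e5, s1, s2, s3, s4, s5⟩
    cases a <;> cases b <;> cases c <;> cases d <;> cases e <;>
      simp only [Bool.false_eq_true, false_iff, true_iff, not_lt,
        eq_self_iff_true] at s1 s2 s3 s4 s5 <;>
      (try replace s1 := lt_of_le_of_ne s1 n1) <;>
      (try replace s2 := lt_of_le_of_ne s2 n2) <;>
      (try replace s3 := lt_of_le_of_ne s3 n3) <;>
      (try replace s4 := lt_of_le_of_ne s4 n4) <;>
      (try replace s5 := lt_of_le_of_ne s5 n5) <;>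
      first
        | (simp; done)
        | (exfalso; nlinarith [s1, s2, s3, s4, s5])
  · rintro (h | h | h | h | h | h | h | h | h | h | h | h) <;>
      obtain ⟨rfl, rfl, rfl, rfl, rfl⟩ := h
    · exact ⟨1/2, 3/4, 1/2, 2/3, 2/3, by norm_num⟩
    · exact ⟨-1, 3/2, 1/2, 1/3, 4/3, by norm_num⟩
    · exact ⟨2, -3, 2, 1/3, 1/3, by norm_num⟩
    · exact ⟨1/2, 3/2, -1, 4/3, 1/3, by norm_num⟩
    · exact ⟨1/4, 1/2, 2, -2, 3/2, by norm_num⟩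
    · exact ⟨2, 1/2, 1/4, 3/2, -2, by norm_num⟩
    · exact ⟨-2, -3, -2, -1, -1, by norm_num⟩
    · exact ⟨3, -1/2, 1/2, -1, 4, by norm_num⟩
    · exact ⟨2, 3, -1, 2/3, -1/3, by norm_num⟩
    · exact ⟨-1, 3, 2, -1/3, 2/3, by norm_num⟩
    · exact ⟨1/2, -1, 4, 3, -1/2, by norm_num⟩
    · exact ⟨-1/2, 3/4, -1/2, 2, 2, by norm_num⟩
end

section
/- Let u ∈ ℝ⁵ satisfy the M0,5 u-equations with u_i ≥ 0 for all i. Then 0 ≤ u_i ≤ 1 for all i, and for each index i (taken cyclically modulo 5): if u_i = 0 then u_{i−1} = u_{i+1} = 1 and u_{i+2} + u_{i−2} = 1 with u_{i+2}, u_{i−2} ≥ 0. In particular, if u2 = 0 then u1 = u3 = 1 and u4 + u5 = 1. -/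
/-- Nonnegative real solutions of the (cyclic) `M_{0,5}` u-equations
`u_i · u_{i+2} + u_{i+1} = 1` lie in `[0,1]⁵`; if some `u_i = 0` then its two cyclic
neighbors equal `1`, and the remaining two coordinates are nonnegative and sum to `1`.
Here `u 0, …, u 4` stand for `u1, …, u5`, and indices are cyclic modulo 5
(so `i − 1 = i + 4` and `i − 2 = i + 3`). -/
theorem stmt3 (u : Fin 5 → ℝ)
    (heq : ∀ i : Fin 5, u i * u (i + 2) + u (i + 1) = 1)
    (hpos : ∀ i : Fin 5, 0 ≤ u i) :
    (∀ i : Fin 5, 0 ≤ u i ∧ u i ≤ 1) ∧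
    (∀ i : Fin 5, u i = 0 →
      u (i + 4) = 1 ∧ u (i + 1) = 1 ∧ u (i + 2) + u (i + 3) = 1 ∧
      0 ≤ u (i + 2) ∧ 0 ≤ u (i + 3)) ∧
    (u 1 = 0 → u 0 = 1 ∧ u 2 = 1 ∧ u 3 + u 4 = 1) := by
  have h0 : u 0 * u 2 + u 1 = 1 := heq 0
  have h1 : u 1 * u 3 + u 2 = 1 := heq 1
  have h2 : u 2 * u 4 + u 3 = 1 := heq 2
  have h3 : u 3 * u 0 + u 4 = 1 := heq 3
  have h4 : u 4 * u 1 + u 0 = 1 := heq 4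
  have p0 := hpos 0; have p1 := hpos 1; have p2 := hpos 2; have p3 := hpos 3; have p4 := hpos 4
  have key : ∀ a b c d e : ℝ, a * c + b = 1 → b * d + c = 1 → c * e + d = 1 →
      b = 0 → a = 1 ∧ c = 1 ∧ d + e = 1 := by
    intro a b c d e e1 e2 e3 hb
    subst hb
    rw [zero_mul, zero_add] at e2
    rw [e2, mul_one] at e1
    rw [e2, one_mul] at e3
    exact ⟨by linarith, e2, by linarith⟩
  have q0 : u 0 ≤ 1 := by nlinarith [mul_nonneg p4 p1]
  have q1 : u 1 ≤ 1 := by nlinarith [mul_nonneg p0 p2]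
  have q2 : u 2 ≤ 1 := by nlinarith [mul_nonneg p1 p3]
  have q3 : u 3 ≤ 1 := by nlinarith [mul_nonneg p2 p4]
  have q4 : u 4 ≤ 1 := by nlinarith [mul_nonneg p3 p0]
  have z0 := key (u 4) (u 0) (u 1) (u 2) (u 3) h4 h0 h1
  have z1 := key (u 0) (u 1) (u 2) (u 3) (u 4) h0 h1 h2
  have z2 := key (u 1) (u 2) (u 3) (u 4) (u 0) h1 h2 h3
  have z3 := key (u 2) (u 3) (u 4) (u 0) (u 1) h2 h3 h4
  have z4 := key (u 3) (u 4) (u 0) (u 1) (u 2) h3 h4 h0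
  refine ⟨fun i => ⟨hpos i, ?_⟩, fun i hi => ?_, fun h => ?_⟩
  · fin_cases i
    · exact q0
    · exact q1
    · exact q2
    · exact q3
    · exact q4
  · fin_cases i
    · exact ⟨(z0 hi).1, (z0 hi).2.1, (z0 hi).2.2, p2, p3⟩
    · exact ⟨(z1 hi).1, (z1 hi).2.1, (z1 hi).2.2, p3, p4⟩
    · exact ⟨(z2 hi).1, (z2 hi).2.1, (z2 hi).2.2, p4, p0⟩
    · exact ⟨(z3 hi).1, (z3 hi).2.1, (z3 hi).2.2, p0, p1⟩
    · exact ⟨(z4 hi).1, (z4 hi).2.1, (z4 hi).2.2, p1, p2⟩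
  · exact ⟨(z1 h).1, (z1 h).2.1, (z1 h).2.2⟩
end

section
/- A vector v ∈ ℝ⁵ satisfies the five tropical equations min(v_i + v_{i+2}, v_{i+1}) = 0 for all i ∈ ℤ/5 (indices cyclic modulo 5, i.e. min(v1+v3,v2) = min(v2+v4,v3) = min(v3+v5,v4) = min(v4+v1,v5) = min(v5+v2,v1) = 0) if and only if there exist an index i ∈ ℤ/5 and real numbers a, b ≥ 0 such that v = a·e_i + b·e_{i+2}, where e_1,...,e_5 are the standard basis vectors of ℝ⁵. Thus the solution set is a cone over a pentagon: the union of the five two-dimensional cones spanned by {e_i, e_{i+2}}. -/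
lemma aux (v : Fin 5 → ℝ) (i : Fin 5) (h1 : 0 ≤ v i) (h2 : 0 ≤ v (i+2))
    (h3 : v (i+1) = 0) (h4 : v (i+3) = 0) (h5 : v (i+4) = 0) :
    ∃ (i : Fin 5) (a b : ℝ), 0 ≤ a ∧ 0 ≤ b ∧
      v = fun j => a * (if j = i then 1 else 0) + b * (if j = i + 2 then 1 else 0) := by
  refine ⟨i, v i, v (i+2), h1, h2, funext fun j => ?_⟩
  fin_cases i <;> fin_cases j <;> simp_all

/-- A vector `v ∈ ℝ⁵` satisfies the five cyclic tropical equations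
`min(v_i + v_{i+2}, v_{i+1}) = 0` if and only if `v = a·e_i + b·e_{i+2}` for some
cyclic index `i` and nonnegative reals `a`, `b`: the solution set is the cone over a
pentagon, namely the union of the five 2-dimensional cones spanned by `{e_i, e_{i+2}}`. -/
theorem stmt4 (v : Fin 5 → ℝ) :
    (∀ i : Fin 5, min (v i + v (i + 2)) (v (i + 1)) = 0) ↔
    ∃ (i : Fin 5) (a b : ℝ), 0 ≤ a ∧ 0 ≤ b ∧
      v = fun j => a * (if j = i then 1 else 0) + b * (if j = i + 2 then 1 else 0) := by
  constructor
  · intro h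
    have hn : ∀ i : Fin 5, 0 ≤ v i := by
      intro i
      have := h (i - 1)
      have h2 : (i - 1) + 1 = i := by omega
      rw [h2] at this
      exact (min_eq_iff.mp this).elim (fun ⟨he, hle⟩ => he ▸ hle) (fun ⟨he, _⟩ => he.ge)
    have hd : ∀ i : Fin 5, (v i = 0 ∧ v (i+2) = 0) ∨ v (i+1) = 0 := by
      intro i
      rcases min_eq_iff.mp (h i) with ⟨he, _⟩ | ⟨he, _⟩
      · exact Or.inl ⟨by have := hn i; have := hn (i+2); linarith,
          by have := hn i; have := hn (i+2); linarith⟩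
      · exact Or.inr he
    have d0 := hd 0; have d1 := hd 1; have d2 := hd 2; have d3 := hd 3; have d4 := hd 4
    simp only [show (0:Fin 5)+2 = 2 from rfl, show (0:Fin 5)+1 = 1 from rfl,
      show (1:Fin 5)+2 = 3 from rfl, show (1:Fin 5)+1 = 2 from rfl,
      show (2:Fin 5)+2 = 4 from rfl, show (2:Fin 5)+1 = 3 from rfl,
      show (3:Fin 5)+2 = 0 from rfl, show (3:Fin 5)+1 = 4 from rfl,
      show (4:Fin 5)+2 = 1 from rfl, show (4:Fin 5)+1 = 0 from rfl] at d0 d1 d2 d3 d4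
    rcases d0 with ⟨h00,h02⟩|h01 <;> rcases d1 with ⟨h11,h13⟩|h12 <;>
      rcases d2 with ⟨h22,h24⟩|h23 <;> rcases d3 with ⟨h33,h30⟩|h34 <;>
      rcases d4 with ⟨h44,h41⟩|h40 <;>
      first
      | exact aux v 0 (hn 0) (hn 2) (by assumption) (by assumption) (by assumption)
      | exact aux v 1 (hn 1) (hn 3) (by assumption) (by assumption) (by assumption)
      | exact aux v 2 (hn 2) (hn 4) (by assumption) (by assumption) (by assumption)
      | exact aux v 3 (hn 3) (hn 0) (by assumption) (by assumption) (by assumption)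
      | exact aux v 4 (hn 4) (hn 1) (by assumption) (by assumption) (by assumption)
  · rintro ⟨i, a, b, ha, hb, rfl⟩
    intro k
    fin_cases i <;> fin_cases k <;> simp <;> first | simp [min_eq_right, min_eq_left, ha, hb] | linarith
end

section
/- Let s1, s2, s3, s4, s5 be positive real numbers. Consider the likelihood equations s1/x − s3/(1−x) − s5/(y−x) = 0 and s2/y − s4/(1−y) + s5/(y−x) = 0 on the domain of points with x, y, 1−x, 1−y, y−x all nonzero. Then there is exactly one solution in the open triangle {(x,y) ∈ ℝ² : 0 < x < y < 1}, exactly one solution in the open triangle {(x,y) ∈ ℝ² : 0 < y < x < 1}, and every complex solution (x,y) ∈ ℂ² (with x, y, 1−x, 1−y, y−x nonzero) is one of these two real solutions. -/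
/-- Forward: the two likelihood equations imply the product relation and
the key quadratic in `x`. -/
lemma lik_key {K : Type*} [Field K] (s1 s2 s3 s4 s5 x y : K) (hs5 : s5 ≠ 0)
    (hx : x ≠ 0) (hx1 : 1 - x ≠ 0) (hy : y ≠ 0) (hy1 : 1 - y ≠ 0) (hyx : y - x ≠ 0)
    (e1 : s1 / x - s3 / (1 - x) - s5 / (y - x) = 0)
    (e2 : s2 / y - s4 / (1 - y) + s5 / (y - x) = 0) :
    (y - x) * (s1 - (s1 + s3) * x) = s5 * x * (1 - x) ∧
    (s1+s3+s5)*(s1+s2+s3+s4+s5)*x^2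
      - ((s1+s3+s5)*(2*s1+s5)+(s2+s4)*(s1+s5)+s2*(s1+s3))*x
      + s1*(s1+s2+s5) = 0 := by
  have hrw1 : s1 / x - s3 / (1 - x) - s5 / (y - x)
      = ((y - x) * (s1 - (s1 + s3) * x) - s5 * x * (1 - x)) / (x * (1 - x) * (y - x)) := by
    field_simp; ring
  rw [hrw1, div_eq_zero_iff] at e1
  have hP1 : (y - x) * (s1 - (s1 + s3) * x) = s5 * x * (1 - x) := by
    rcases e1 with h | h
    · exact sub_eq_zero.mp h
    · exact absurd h (mul_ne_zero (mul_ne_zero hx hx1) hyx)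
  have hrw2 : s2 / y - s4 / (1 - y) + s5 / (y - x)
      = (s2 * (1 - y) * (y - x) - s4 * y * (y - x) + s5 * y * (1 - y)) / (y * (1 - y) * (y - x)) := by
    field_simp
  rw [hrw2, div_eq_zero_iff] at e2
  have hP2 : s2 * (1 - y) * (y - x) - s4 * y * (y - x) + s5 * y * (1 - y) = 0 := by
    rcases e2 with h | h
    · exact h
    · exact absurd h (mul_ne_zero (mul_ne_zero hy hy1) hyx)
  refine ⟨hP1, ?_⟩
  have h5 : s5 * x * (1 - x) * ((s1+s3+s5)*(s1+s2+s3+s4+s5)*x^2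
      - ((s1+s3+s5)*(2*s1+s5)+(s2+s4)*(s1+s5)+s2*(s1+s3))*x
      + s1*(s1+s2+s5)) = 0 := by
    linear_combination (s1-(s1+s3)*x)^2 * hP2
      - ((s2+(s2+s4)*x+s5)*(s1-(s1+s3)*x)
          - (s2+s4+s5)*((s1-(s1+s3)*x)*y + x*((s1+s5)-(s1+s3+s5)*x))) * hP1
  rcases mul_eq_zero.mp h5 with h | h
  · exact absurd h (mul_ne_zero (mul_ne_zero hs5 hx) hx1)
  · exact h

/-- Backward: a root of the quadratic with `y` defined by the product relation
satisfies both likelihood equations. -/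
lemma lik_back (s1 s2 s3 s4 s5 r y : ℝ) (hs5 : s5 ≠ 0) (hr0 : r ≠ 0) (hr1 : (1:ℝ) - r ≠ 0)
    (hD : s1 - (s1 + s3) * r ≠ 0)
    (hA : (s1 + s5) - (s1 + s3 + s5) * r ≠ 0)
    (hB : s1 - (s1 + s3 + s5) * r ≠ 0)
    (hP1 : (y - r) * (s1 - (s1 + s3) * r) = s5 * r * (1 - r))
    (hQ : (s1+s3+s5)*(s1+s2+s3+s4+s5)*r^2
      - ((s1+s3+s5)*(2*s1+s5)+(s2+s4)*(s1+s5)+s2*(s1+s3))*r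
      + s1*(s1+s2+s5) = 0) :
    y ≠ 0 ∧ 1 - y ≠ 0 ∧ y - r ≠ 0 ∧
    s1 / r - s3 / (1 - r) - s5 / (y - r) = 0 ∧
    s2 / y - s4 / (1 - y) + s5 / (y - r) = 0 := by
  have hyr : y - r ≠ 0 := by
    intro h
    rw [h, zero_mul] at hP1
    exact (mul_ne_zero (mul_ne_zero hs5 hr0) hr1) hP1.symm
  have hyD : y * (s1 - (s1 + s3) * r) = r * ((s1 + s5) - (s1 + s3 + s5) * r) := by
    linear_combination hP1
  have hy0 : y ≠ 0 := by
    intro h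
    rw [h, zero_mul] at hyD
    exact (mul_ne_zero hr0 hA) hyD.symm
  have h1yD : (1 - y) * (s1 - (s1 + s3) * r) = (1 - r) * (s1 - (s1 + s3 + s5) * r) := by
    linear_combination -hP1
  have hy1 : (1:ℝ) - y ≠ 0 := by
    intro h
    rw [h, zero_mul] at h1yD
    exact (mul_ne_zero hr1 hB) h1yD.symm
  refine ⟨hy0, hy1, hyr, ?_, ?_⟩
  · have hrw1 : s1 / r - s3 / (1 - r) - s5 / (y - r)
        = ((y - r) * (s1 - (s1 + s3) * r) - s5 * r * (1 - r)) / (r * (1 - r) * (y - r)) := by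
      field_simp; ring
    rw [hrw1, sub_eq_zero.mpr hP1, zero_div]
  · have hP2 : s2 * (1 - y) * (y - r) - s4 * y * (y - r) + s5 * y * (1 - y) = 0 := by
      have h2 : (s1 - (s1 + s3) * r)^2
          * (s2 * (1 - y) * (y - r) - s4 * y * (y - r) + s5 * y * (1 - y)) = 0 := by
        linear_combination ((s2+(s2+s4)*r+s5)*(s1-(s1+s3)*r)
            - (s2+s4+s5)*((s1-(s1+s3)*r)*y + r*((s1+s5)-(s1+s3+s5)*r))) * hP1
          + (s5*r*(1-r)) * hQ
      rcases mul_eq_zero.mp h2 with h | h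
      · exact absurd h (pow_ne_zero 2 hD)
      · exact h
    have hrw2 : s2 / y - s4 / (1 - y) + s5 / (y - r)
        = (s2 * (1 - y) * (y - r) - s4 * y * (y - r) + s5 * y * (1 - y)) / (y * (1 - y) * (y - r)) := by
      field_simp
    rw [hrw2, hP2, zero_div]

/-- From two distinct roots of a quadratic, recover the coefficient relations. -/
lemma quad_coeffs (C2 C1 C0 r1 r2 : ℝ) (hne : r1 ≠ r2)
    (h1 : C2 * r1^2 - C1 * r1 + C0 = 0) (h2 : C2 * r2^2 - C1 * r2 + C0 = 0) :
    C1 = C2 * (r1 + r2) ∧ C0 = C2 * (r1 * r2) := by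
  have hd : r1 - r2 ≠ 0 := sub_ne_zero.mpr hne
  have hsum : (r1 - r2) * (C2 * (r1 + r2) - C1) = 0 := by linear_combination h1 - h2
  have hs : C1 = C2 * (r1 + r2) := by
    rcases mul_eq_zero.mp hsum with h | h
    · exact absurd h hd
    · linarith [sub_eq_zero.mp h]
  refine ⟨hs, ?_⟩
  linear_combination h1 + r1 * hs

/-- Existence of the two roots of the key quadratic, with location information. -/
lemma lik_roots (s1 s2 s3 s4 s5 : ℝ)
    (h1 : 0 < s1) (h2 : 0 < s2) (h3 : 0 < s3) (h4 : 0 < s4) (h5 : 0 < s5) :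
    ∃ r1 r2 : ℝ, 0 < r1 ∧ r1 < 1 ∧ 0 < r2 ∧ r2 < 1 ∧ r1 < r2 ∧
      ((s1+s3+s5)*(2*s1+s5)+(s2+s4)*(s1+s5)+s2*(s1+s3)
        = (s1+s3+s5)*(s1+s2+s3+s4+s5) * (r1 + r2)) ∧
      (s1*(s1+s2+s5) = (s1+s3+s5)*(s1+s2+s3+s4+s5) * (r1 * r2)) ∧
      0 < s1-(s1+s3+s5)*r1 ∧ 0 < s1-(s1+s3)*r1 ∧ 0 < (s1+s5)-(s1+s3+s5)*r1 ∧
      s1-(s1+s3+s5)*r2 < 0 ∧ s1-(s1+s3)*r2 < 0 ∧ (s1+s5)-(s1+s3+s5)*r2 < 0 := by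
  have hm : (0:ℝ) < s1 + s3 + s5 := by linarith
  have ha : (0:ℝ) < s1 + s3 := by linarith
  have hS : (0:ℝ) < s1 + s2 + s3 + s4 + s5 := by linarith
  have hC2 : (0:ℝ) < (s1+s3+s5) * (s1+s2+s3+s4+s5) := mul_pos hm hS
  set Q : ℝ → ℝ := fun t => (s1+s3+s5)*(s1+s2+s3+s4+s5)*t^2
      - ((s1+s3+s5)*(2*s1+s5)+(s2+s4)*(s1+s5)+s2*(s1+s3))*t
      + s1*(s1+s2+s5) with hQdef
  have hQc : Continuous Q := by
    simp only [hQdef]; continuity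
  have hQ0 : 0 < Q 0 := by simp only [hQdef]; nlinarith
  have hQ1 : 0 < Q 1 := by simp only [hQdef]; nlinarith
  have hQq : Q (s1/(s1+s3+s5)) < 0 := by
    have h : Q (s1/(s1+s3+s5)) = -(s1*s4*s5/(s1+s3+s5)) := by
      simp only [hQdef]; field_simp; ring
    rw [h, neg_lt_zero]; positivity
  have hQA : Q ((s1+s5)/(s1+s3+s5)) < 0 := by
    have h : Q ((s1+s5)/(s1+s3+s5)) = -(s2*s3*s5/(s1+s3+s5)) := by
      simp only [hQdef]; field_simp; ring
    rw [h, neg_lt_zero]; positivity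
  have hQD : Q (s1/(s1+s3)) < 0 := by
    have h : Q (s1/(s1+s3)) = -(s1*s3*s5*(s2+s4+s5)/(s1+s3)^2) := by
      simp only [hQdef]; field_simp; ring
    rw [h, neg_lt_zero]; positivity
  have hq0 : (0:ℝ) ≤ s1/(s1+s3+s5) := by positivity
  have hq1 : s1/(s1+s3+s5) ≤ 1 := by
    rw [div_le_one hm]; linarith
  obtain ⟨r1, hr1mem, hr1⟩ :=
    intermediate_value_Icc' hq0 hQc.continuousOn ⟨hQq.le, hQ0.le⟩
  obtain ⟨r2, hr2mem, hr2⟩ :=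
    intermediate_value_Icc hq1 hQc.continuousOn ⟨hQq.le, hQ1.le⟩
  have hr1pos : 0 < r1 := by
    rcases lt_or_eq_of_le hr1mem.1 with h | h
    · exact h
    · exfalso; rw [← h] at hr1; rw [hr1] at hQ0; exact lt_irrefl _ hQ0
  have hr1lt : r1 < s1/(s1+s3+s5) := by
    rcases lt_or_eq_of_le hr1mem.2 with h | h
    · exact h
    · exfalso; rw [h] at hr1; rw [hr1] at hQq; exact lt_irrefl _ hQq
  have hr2gt : s1/(s1+s3+s5) < r2 := by
    rcases lt_or_eq_of_le hr2mem.1 with h | h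
    · exact h
    · exfalso; rw [← h] at hr2; rw [hr2] at hQq; exact lt_irrefl _ hQq
  have hr2lt : r2 < 1 := by
    rcases lt_or_eq_of_le hr2mem.2 with h | h
    · exact h
    · exfalso; rw [h] at hr2; rw [hr2] at hQ1; exact lt_irrefl _ hQ1
  have hr12 : r1 < r2 := lt_trans hr1lt hr2gt
  obtain ⟨hsum, hprod⟩ := quad_coeffs ((s1+s3+s5)*(s1+s2+s3+s4+s5))
      ((s1+s3+s5)*(2*s1+s5)+(s2+s4)*(s1+s5)+s2*(s1+s3)) (s1*(s1+s2+s5)) r1 r2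
      (ne_of_lt hr12) (by simpa [hQdef] using hr1) (by simpa [hQdef] using hr2)
  have hfact : ∀ t : ℝ, Q t = (s1+s3+s5)*(s1+s2+s3+s4+s5) * ((t - r1)*(t - r2)) := by
    intro t; simp only [hQdef]; linear_combination -t*hsum + hprod
  have hQDE : (s1+s3+s5)*(s1+s2+s3+s4+s5)
      * ((s1/(s1+s3) - r1)*(s1/(s1+s3) - r2)) < 0 := by
    rw [← hfact]; exact hQD
  have hQAE : (s1+s3+s5)*(s1+s2+s3+s4+s5)
      * (((s1+s5)/(s1+s3+s5) - r1)*((s1+s5)/(s1+s3+s5) - r2)) < 0 := by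
    rw [← hfact]; exact hQA
  have hQDE' : (s1+s3+s5)*(s1+s2+s3+s4+s5)
      * ((s1 - (s1+s3)*r1)*(s1 - (s1+s3)*r2)) < 0 := by
    have h := mul_neg_of_pos_of_neg (pow_pos ha 2) hQDE
    calc (s1+s3+s5)*(s1+s2+s3+s4+s5) * ((s1 - (s1+s3)*r1)*(s1 - (s1+s3)*r2))
        = (s1+s3)^2 * ((s1+s3+s5)*(s1+s2+s3+s4+s5)
            * ((s1/(s1+s3) - r1)*(s1/(s1+s3) - r2))) := by
          field_simp
      _ < 0 := h
  have hQAE' : (s1+s3+s5)*(s1+s2+s3+s4+s5)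
      * (((s1+s5) - (s1+s3+s5)*r1)*((s1+s5) - (s1+s3+s5)*r2)) < 0 := by
    have h := mul_neg_of_pos_of_neg (pow_pos hm 2) hQAE
    calc (s1+s3+s5)*(s1+s2+s3+s4+s5)
          * (((s1+s5) - (s1+s3+s5)*r1)*((s1+s5) - (s1+s3+s5)*r2))
        = (s1+s3+s5)^2 * ((s1+s3+s5)*(s1+s2+s3+s4+s5)
            * (((s1+s5)/(s1+s3+s5) - r1)*((s1+s5)/(s1+s3+s5) - r2))) := by
          field_simp
      _ < 0 := h
  have hB1 : 0 < s1 - (s1+s3+s5)*r1 := by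
    have := (lt_div_iff₀ hm).mp hr1lt; linarith
  have hB2 : s1 - (s1+s3+s5)*r2 < 0 := by
    have := (div_lt_iff₀ hm).mp hr2gt; linarith
  have hres : 0 < r1 ∧ r1 < 1 ∧ 0 < r2 ∧ r2 < 1 := by
    refine ⟨hr1pos, lt_of_lt_of_le hr1lt hq1, lt_of_le_of_lt hq0 hr2gt, hr2lt⟩
  obtain ⟨u1, u2, u3, u4⟩ := hres
  clear hfact hQc hQ0 hQ1 hQq hQA hQD hQDE hQAE hr1 hr2 hr1mem hr2mem
  clear hr1lt hr2gt hq0 hq1 hr1pos hr2lt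
  clear_value Q
  clear Q hQdef
  have hD1 : 0 < s1 - (s1+s3)*r1 := by linarith [mul_pos h5 u1]
  have hA1 : 0 < (s1+s5) - (s1+s3+s5)*r1 := by linarith
  have hD2 : s1 - (s1+s3)*r2 < 0 := by
    by_contra hcon
    push_neg at hcon
    have hnn := mul_nonneg (mul_pos hC2 hD1).le hcon
    linarith [hQDE', hnn]
  have hA2 : (s1+s5) - (s1+s3+s5)*r2 < 0 := by
    by_contra hcon
    push_neg at hcon
    have hnn := mul_nonneg (mul_pos hC2 hA1).le hcon
    linarith [hQAE', hnn]
  exact ⟨r1, r2, u1, u2, u3, u4, hr12, hsum, hprod, hB1, hD1, hA1, hB2, hD2, hA2⟩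

/-- For positive real `s1,…,s5`, the likelihood equations
`s1/x − s3/(1−x) − s5/(y−x) = 0` and `s2/y − s4/(1−y) + s5/(y−x) = 0` have exactly one
solution in each of the two open triangles `0 < x < y < 1` and `0 < y < x < 1`, and every
complex solution (with `x, y, 1−x, 1−y, y−x` nonzero) is one of these two real solutions. -/
theorem stmt6 (s1 s2 s3 s4 s5 : ℝ)
    (h1 : 0 < s1) (h2 : 0 < s2) (h3 : 0 < s3) (h4 : 0 < s4) (h5 : 0 < s5) :
    (∃! p : ℝ × ℝ, (0 < p.1 ∧ p.1 < p.2 ∧ p.2 < 1) ∧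
      s1 / p.1 - s3 / (1 - p.1) - s5 / (p.2 - p.1) = 0 ∧
      s2 / p.2 - s4 / (1 - p.2) + s5 / (p.2 - p.1) = 0) ∧
    (∃! p : ℝ × ℝ, (0 < p.2 ∧ p.2 < p.1 ∧ p.1 < 1) ∧
      s1 / p.1 - s3 / (1 - p.1) - s5 / (p.2 - p.1) = 0 ∧
      s2 / p.2 - s4 / (1 - p.2) + s5 / (p.2 - p.1) = 0) ∧
    (∀ x y : ℂ, x ≠ 0 → y ≠ 0 → 1 - x ≠ 0 → 1 - y ≠ 0 → y - x ≠ 0 →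
      (s1 : ℂ) / x - (s3 : ℂ) / (1 - x) - (s5 : ℂ) / (y - x) = 0 →
      (s2 : ℂ) / y - (s4 : ℂ) / (1 - y) + (s5 : ℂ) / (y - x) = 0 →
      ∃ p : ℝ × ℝ,
        ((0 < p.1 ∧ p.1 < p.2 ∧ p.2 < 1) ∨ (0 < p.2 ∧ p.2 < p.1 ∧ p.1 < 1)) ∧
        (s1 / p.1 - s3 / (1 - p.1) - s5 / (p.2 - p.1) = 0 ∧
          s2 / p.2 - s4 / (1 - p.2) + s5 / (p.2 - p.1) = 0) ∧
        x = (p.1 : ℂ) ∧ y = (p.2 : ℂ)) := by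
  have hm : (0:ℝ) < s1 + s3 + s5 := by linarith
  have hS : (0:ℝ) < s1 + s2 + s3 + s4 + s5 := by linarith
  have hC2 : (0:ℝ) < (s1+s3+s5) * (s1+s2+s3+s4+s5) := mul_pos hm hS
  obtain ⟨r1, r2, hr1pos, hr1lt1, hr2pos, hr2lt, hr12, hsum, hprod,
    hB1, hD1, hA1, hB2, hD2, hA2⟩ := lik_roots s1 s2 s3 s4 s5 h1 h2 h3 h4 h5
  have hroot : ∀ t : ℝ, (s1+s3+s5)*(s1+s2+s3+s4+s5)*t^2
      - ((s1+s3+s5)*(2*s1+s5)+(s2+s4)*(s1+s5)+s2*(s1+s3))*t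
      + s1*(s1+s2+s5) = 0 → t = r1 ∨ t = r2 := by
    intro t ht
    have h0 : (s1+s3+s5)*(s1+s2+s3+s4+s5) * ((t - r1)*(t - r2)) = 0 := by
      linear_combination ht + t*hsum - hprod
    have h : (t - r1)*(t - r2) = 0 := (mul_eq_zero.mp h0).resolve_left hC2.ne'
    rcases mul_eq_zero.mp h with h | h
    · exact Or.inl (sub_eq_zero.mp h)
    · exact Or.inr (sub_eq_zero.mp h)
  set y1 : ℝ := r1 + s5*r1*(1-r1)/(s1-(s1+s3)*r1) with hy1def
  set y2 : ℝ := r2 + s5*r2*(1-r2)/(s1-(s1+s3)*r2) with hy2def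
  have hP1r1 : (y1 - r1) * (s1 - (s1 + s3) * r1) = s5 * r1 * (1 - r1) := by
    rw [hy1def, add_sub_cancel_left]
    exact div_mul_cancel₀ _ hD1.ne'
  have hP1r2 : (y2 - r2) * (s1 - (s1 + s3) * r2) = s5 * r2 * (1 - r2) := by
    rw [hy2def, add_sub_cancel_left]
    exact div_mul_cancel₀ _ hD2.ne
  have hr1K : (s1+s3+s5)*(s1+s2+s3+s4+s5)*r1^2
      - ((s1+s3+s5)*(2*s1+s5)+(s2+s4)*(s1+s5)+s2*(s1+s3))*r1
      + s1*(s1+s2+s5) = 0 := by linear_combination -r1*hsum + hprod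
  have hr2K : (s1+s3+s5)*(s1+s2+s3+s4+s5)*r2^2
      - ((s1+s3+s5)*(2*s1+s5)+(s2+s4)*(s1+s5)+s2*(s1+s3))*r2
      + s1*(s1+s2+s5) = 0 := by linear_combination -r2*hsum + hprod
  obtain ⟨hy1ne, h1y1ne, hy1r1ne, eq11, eq12⟩ :=
    lik_back s1 s2 s3 s4 s5 r1 y1 h5.ne' hr1pos.ne' (by linarith) hD1.ne' hA1.ne' hB1.ne'
      hP1r1 hr1K
  obtain ⟨hy2ne, h1y2ne, hy2r2ne, eq21, eq22⟩ :=
    lik_back s1 s2 s3 s4 s5 r2 y2 h5.ne' hr2pos.ne' (by linarith) hD2.ne hA2.ne hB2.ne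
      hP1r2 hr2K
  -- triangle membership for (r1, y1)
  have t1b : r1 < y1 := by
    have hnum : 0 < s5 * r1 * (1 - r1) := by
      have := mul_pos (mul_pos h5 hr1pos) (show (0:ℝ) < 1 - r1 by linarith)
      linarith
    by_contra hcon
    push_neg at hcon
    have := mul_nonpos_of_nonpos_of_nonneg (by linarith : y1 - r1 ≤ 0) hD1.le
    linarith [hP1r1]
  have t1c : y1 < 1 := by
    have h1y : (1 - y1) * (s1 - (s1+s3)*r1) = (1-r1) * (s1 - (s1+s3+s5)*r1) := by
      linear_combination -hP1r1
    have hpos : 0 < (1-r1) * (s1 - (s1+s3+s5)*r1) :=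
      mul_pos (by linarith) hB1
    by_contra hcon
    push_neg at hcon
    have := mul_nonpos_of_nonpos_of_nonneg (by linarith : 1 - y1 ≤ 0) hD1.le
    linarith
  -- triangle membership for (r2, y2)
  have t2b : y2 < r2 := by
    have hnum : 0 < s5 * r2 * (1 - r2) := by
      have := mul_pos (mul_pos h5 hr2pos) (show (0:ℝ) < 1 - r2 by linarith)
      linarith
    by_contra hcon
    push_neg at hcon
    have := mul_nonpos_of_nonneg_of_nonpos (by linarith : 0 ≤ y2 - r2) hD2.le
    linarith [hP1r2]
  have t2a : 0 < y2 := by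
    have hyD : y2 * (s1 - (s1+s3)*r2) = r2 * ((s1+s5) - (s1+s3+s5)*r2) := by
      linear_combination hP1r2
    have hneg : r2 * ((s1+s5) - (s1+s3+s5)*r2) < 0 :=
      mul_neg_of_pos_of_neg hr2pos hA2
    by_contra hcon
    push_neg at hcon
    have := mul_nonneg (by linarith : 0 ≤ -y2) (by linarith : 0 ≤ -(s1 - (s1+s3)*r2))
    linarith [hyD, hneg, this]
  refine ⟨⟨(r1, y1), ⟨⟨hr1pos, t1b, t1c⟩, eq11, eq12⟩, ?_⟩,
      ⟨(r2, y2), ⟨⟨t2a, t2b, hr2lt⟩, eq21, eq22⟩, ?_⟩, ?_⟩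
  · -- uniqueness in triangle 1
    rintro ⟨x, y⟩ ⟨⟨hx0, hxy, hyl⟩, he1, he2⟩
    obtain ⟨hP1x, hQx⟩ := lik_key s1 s2 s3 s4 s5 x y h5.ne' hx0.ne'
      (ne_of_gt (by linarith) : (1:ℝ) - x ≠ 0)
      ((lt_trans hx0 hxy).ne' : y ≠ 0)
      (ne_of_gt (by linarith) : (1:ℝ) - y ≠ 0)
      ((sub_pos.mpr hxy).ne' : y - x ≠ 0) he1 he2
    rcases hroot x hQx with h | h
    · rw [h] at hP1x
      have hyy : y = y1 := by
        have hc : (y - r1) * (s1 - (s1+s3)*r1) = (y1 - r1) * (s1 - (s1+s3)*r1) :=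
          hP1x.trans hP1r1.symm
        have := mul_right_cancel₀ hD1.ne' hc
        linarith
      rw [h, hyy]
    · exfalso
      rw [h] at hP1x hxy
      have hpos : 0 < s5 * r2 * (1 - r2) := by
        have := mul_pos (mul_pos h5 hr2pos) (show (0:ℝ) < 1 - r2 by linarith)
        linarith
      have hneg : (y - r2) * (s1 - (s1+s3)*r2) < 0 :=
        mul_neg_of_pos_of_neg (sub_pos.mpr hxy) hD2
      rw [hP1x] at hneg
      linarith
  · -- uniqueness in triangle 2
    rintro ⟨x, y⟩ ⟨⟨hy0, hyx', hxl⟩, he1, he2⟩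
    obtain ⟨hP1x, hQx⟩ := lik_key s1 s2 s3 s4 s5 x y h5.ne'
      ((lt_trans hy0 hyx').ne' : x ≠ 0)
      (ne_of_gt (by linarith) : (1:ℝ) - x ≠ 0)
      (hy0.ne' : y ≠ 0)
      (ne_of_gt (by linarith) : (1:ℝ) - y ≠ 0)
      ((sub_neg.mpr hyx').ne : y - x ≠ 0) he1 he2
    rcases hroot x hQx with h | h
    · exfalso
      rw [h] at hP1x hyx'
      have hpos : 0 < s5 * r1 * (1 - r1) := by
        have := mul_pos (mul_pos h5 hr1pos) (show (0:ℝ) < 1 - r1 by linarith)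
        linarith
      have hneg : (y - r1) * (s1 - (s1+s3)*r1) < 0 :=
        mul_neg_of_neg_of_pos (sub_neg.mpr hyx') hD1
      rw [hP1x] at hneg
      linarith
    · rw [h] at hP1x
      have hyy : y = y2 := by
        have hc : (y - r2) * (s1 - (s1+s3)*r2) = (y2 - r2) * (s1 - (s1+s3)*r2) :=
          hP1x.trans hP1r2.symm
        have := mul_right_cancel₀ hD2.ne hc
        linarith
      rw [h, hyy]
  · -- complex solutions
    rintro x y hx hy hx1 hy1 hyx he1 he2
    obtain ⟨hP1c, hQxc⟩ := lik_key (s1:ℂ) (s2:ℂ) (s3:ℂ) (s4:ℂ) (s5:ℂ) x y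
      (by exact_mod_cast h5.ne') hx hx1 hy hy1 hyx he1 he2
    have hsumc : ((s1:ℂ)+s3+s5)*(2*(s1:ℂ)+s5)+((s2:ℂ)+s4)*((s1:ℂ)+s5)+(s2:ℂ)*((s1:ℂ)+s3)
        = ((s1:ℂ)+s3+s5)*((s1:ℂ)+s2+s3+s4+s5) * ((r1:ℂ) + (r2:ℂ)) := by
      exact_mod_cast congrArg (fun t : ℝ => (t:ℂ)) hsum
    have hprodc : (s1:ℂ)*((s1:ℂ)+s2+s5)
        = ((s1:ℂ)+s3+s5)*((s1:ℂ)+s2+s3+s4+s5) * ((r1:ℂ) * (r2:ℂ)) := by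
      exact_mod_cast congrArg (fun t : ℝ => (t:ℂ)) hprod
    have hC2c : ((s1:ℂ)+s3+s5)*((s1:ℂ)+s2+s3+s4+s5) ≠ 0 := by
      intro h
      exact hC2.ne' (by exact_mod_cast h)
    have hfc : (x - (r1:ℂ)) * (x - (r2:ℂ)) = 0 := by
      have h : ((s1:ℂ)+s3+s5)*((s1:ℂ)+s2+s3+s4+s5) * ((x - (r1:ℂ)) * (x - (r2:ℂ))) = 0 := by
        linear_combination hQxc + x*hsumc - hprodc
      exact (mul_eq_zero.mp h).resolve_left hC2c
    rcases mul_eq_zero.mp hfc with h | h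
    · have hxr : x = (r1:ℂ) := sub_eq_zero.mp h
      subst hxr
      have hDc : (s1:ℂ) - ((s1:ℂ)+(s3:ℂ))*(r1:ℂ) ≠ 0 := by
        intro hz
        exact hD1.ne' (by exact_mod_cast hz)
      have hP1r1c : ((y1:ℂ) - (r1:ℂ)) * ((s1:ℂ) - ((s1:ℂ)+(s3:ℂ))*(r1:ℂ))
          = (s5:ℂ) * (r1:ℂ) * (1 - (r1:ℂ)) := by
        exact_mod_cast congrArg (fun t : ℝ => (t:ℂ)) hP1r1
      have hyv : y = (y1:ℂ) := by
        have hc : (y - (r1:ℂ)) * ((s1:ℂ) - ((s1:ℂ)+(s3:ℂ))*(r1:ℂ))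
            = ((y1:ℂ) - (r1:ℂ)) * ((s1:ℂ) - ((s1:ℂ)+(s3:ℂ))*(r1:ℂ)) := by
          rw [hP1r1c]; linear_combination hP1c
        have := mul_right_cancel₀ hDc hc
        linear_combination this
      exact ⟨(r1, y1), Or.inl ⟨hr1pos, t1b, t1c⟩, ⟨eq11, eq12⟩, rfl, hyv⟩
    · have hxr : x = (r2:ℂ) := sub_eq_zero.mp h
      subst hxr
      have hDc : (s1:ℂ) - ((s1:ℂ)+(s3:ℂ))*(r2:ℂ) ≠ 0 := by
        intro hz
        exact hD2.ne (by exact_mod_cast hz)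
      have hP1r2c : ((y2:ℂ) - (r2:ℂ)) * ((s1:ℂ) - ((s1:ℂ)+(s3:ℂ))*(r2:ℂ))
          = (s5:ℂ) * (r2:ℂ) * (1 - (r2:ℂ)) := by
        exact_mod_cast congrArg (fun t : ℝ => (t:ℂ)) hP1r2
      have hyv : y = (y2:ℂ) := by
        have hc : (y - (r2:ℂ)) * ((s1:ℂ) - ((s1:ℂ)+(s3:ℂ))*(r2:ℂ))
            = ((y2:ℂ) - (r2:ℂ)) * ((s1:ℂ) - ((s1:ℂ)+(s3:ℂ))*(r2:ℂ)) := by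
          rw [hP1r2c]; linear_combination hP1c
        have := mul_right_cancel₀ hDc hc
        linear_combination this
      exact ⟨(r2, y2), Or.inr ⟨t2a, t2b, hr2lt⟩, ⟨eq21, eq22⟩, rfl, hyv⟩
end

section
/- Let u ∈ ℂ^15 satisfy the E6 u-equations and suppose u11 = 0. Then u4 = u5 = u7 = u8 = u12 = u13 = u14 = u15 = 1, and u1 + u2 = 1, u3 + u6 = 1, u9 + u10 = 1. (This is the cube facet of the E6 pezzotope: the residue of the canonical form at u11 = 0 lives on a product of three copies of M0,4.) -/
/-- The fifteen `E6` u-equations on `u : Fin 15 → ℂ` (`u i` stands for `u_{i+1}`). -/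
def E6System (u : Fin 15 → ℂ) : Prop :=
  u 0 + u 1 * u 4 * u 6 * u 12 * u 14 = 1 ∧
  u 1 + u 0 * u 3 * u 7 * u 11 * u 13 = 1 ∧
  u 2 + u 3 * u 4 * u 5 * u 13 * u 14 = 1 ∧
  u 3 + u 1 * u 2 * u 8 * u 10 * u 12 = 1 ∧
  u 4 + u 0 * u 2 * u 9 * u 10 * u 11 = 1 ∧
  u 5 + u 2 * u 6 * u 7 * u 11 * u 12 = 1 ∧
  u 6 + u 0 * u 5 * u 8 * u 10 * u 13 = 1 ∧
  u 7 + u 1 * u 5 * u 9 * u 10 * u 14 = 1 ∧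
  u 8 + u 3 * u 6 * u 9 * u 11 * u 14 = 1 ∧
  u 9 + u 4 * u 7 * u 8 * u 12 * u 13 = 1 ∧
  u 10 + u 3 * u 4 * u 6 * u 7 * u 11 * u 12 * u 13 * u 14 = 1 ∧
  u 11 + u 1 * u 4 * u 5 * u 8 * u 10 * u 12 * u 13 * u 14 = 1 ∧
  u 12 + u 0 * u 3 * u 5 * u 9 * u 10 * u 11 * u 13 * u 14 = 1 ∧
  u 13 + u 1 * u 2 * u 6 * u 9 * u 10 * u 11 * u 12 * u 14 = 1 ∧
  u 14 + u 0 * u 2 * u 7 * u 8 * u 10 * u 11 * u 12 * u 13 = 1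

/-- If `u ∈ ℂ¹⁵` satisfies the `E6` u-equations and `u11 = 0` (here `u 10 = 0`), then
`u4 = u5 = u7 = u8 = u12 = u13 = u14 = u15 = 1` and `u1 + u2 = 1`, `u3 + u6 = 1`,
`u9 + u10 = 1`: the cube facet of the `E6` pezzotope. -/
theorem stmt18 (u : Fin 15 → ℂ) (h : E6System u) (h11 : u 10 = 0) :
    u 3 = 1 ∧ u 4 = 1 ∧ u 6 = 1 ∧ u 7 = 1 ∧ u 11 = 1 ∧ u 12 = 1 ∧ u 13 = 1 ∧ u 14 = 1 ∧
    u 0 + u 1 = 1 ∧ u 2 + u 5 = 1 ∧ u 8 + u 9 = 1 := by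
  obtain ⟨e1, e2, e3, e4, e5, e6, e7, e8, e9, e10, e11, e12, e13, e14, e15⟩ := h
  rw [h11] at e4 e5 e7 e8 e12 e13 e14 e15
  simp only [mul_zero, zero_mul, add_zero] at e4 e5 e7 e8 e12 e13 e14 e15
  refine ⟨e4, e5, e7, e8, e12, e13, e14, e15, ?_, ?_, ?_⟩
  · rw [e5, e7, e13, e15] at e1; linear_combination e1
  · rw [e4, e5, e14, e15] at e3; linear_combination e3
  · rw [e5, e8, e13, e14] at e10; linear_combination e10
end

section
/- Let u ∈ ℂ^15 satisfy the E6 u-equations and suppose u1 = 0. Then u2 = u5 = u7 = u13 = u15 = 1, and the remaining nine coordinates satisfy the u-equations of M0,6: u10 + u8·u9·u14 = 1, u11 + u4·u8·u12·u14 = 1, u6 + u3·u8·u12 = 1, u9 + u4·u10·u12 = 1, u14 + u3·u10·u11·u12 = 1, u8 + u6·u10·u11 = 1, u4 + u3·u9·u11 = 1, u12 + u6·u9·u11·u14 = 1, u3 + u4·u6·u14 = 1. (This is an associahedron facet of the E6 pezzotope: the residue of the canonical form at u1 = 0 lives on the moduli space M0,6.) -/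
/-- If `u ∈ ℂ¹⁵` satisfies the `E6` u-equations and `u1 = 0` (here `u 0 = 0`), then
`u2 = u5 = u7 = u13 = u15 = 1` and the remaining nine coordinates satisfy the
u-equations of `M_{0,6}`: an associahedron facet of the `E6` pezzotope. -/
theorem stmt19 (u : Fin 15 → ℂ) (h : E6System u) (h1 : u 0 = 0) :
    (u 1 = 1 ∧ u 4 = 1 ∧ u 6 = 1 ∧ u 12 = 1 ∧ u 14 = 1) ∧
    (u 9 + u 7 * u 8 * u 13 = 1 ∧
      u 10 + u 3 * u 7 * u 11 * u 13 = 1 ∧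
      u 5 + u 2 * u 7 * u 11 = 1 ∧
      u 8 + u 3 * u 9 * u 11 = 1 ∧
      u 13 + u 2 * u 9 * u 10 * u 11 = 1 ∧
      u 7 + u 5 * u 9 * u 10 = 1 ∧
      u 3 + u 2 * u 8 * u 10 = 1 ∧
      u 11 + u 5 * u 8 * u 10 * u 13 = 1 ∧
      u 2 + u 3 * u 5 * u 13 = 1) := by
  obtain ⟨e1, e2, e3, e4, e5, e6, e7, e8, e9, e10, e11, e12, e13, e14, e15⟩ := h
  rw [h1] at e2 e5 e7 e13 e15
  simp at e2 e5 e7 e13 e15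
  simp only [e2, e5, e7, e13, e15, one_mul, mul_one] at e3 e4 e6 e8 e9 e10 e11 e12 e14
  refine ⟨⟨e2, e5, e7, e13, e15⟩, ?_, ?_, ?_, ?_, ?_, ?_, ?_, ?_, ?_⟩
  · linear_combination e10
  · linear_combination e11
  · linear_combination e6
  · linear_combination e9
  · linear_combination e14
  · linear_combination e8
  · linear_combination e4
  · linear_combination e12
  · linear_combination e3
end
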